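/- arXiv:1212.6462 — 2 statements merged into one kernel-verified Lean document; each statement's English description precedes it below -/
import Mathlib

section
/- Two elements a, b of Rot_n are D-related if and only if there exists an integer k with r^k · ran(a) = ran(b), i.e., ran(b) is a rotation of ran(a); consequently the D-class of an idempotent e contains exactly j(e) idempotents. -/
/-- The rook monoid `R_n`: injective partial functions on `Fin n`. -/
abbrev PartialInj (n : ℕ) :=
  {f : Fin n → Option (Fin n) // ∀ a b c : Fin n, f a = some c → f b = some c → a = b}

/-- Composition in `R_n`: `pcomp f g` applies `g` first, then `f`. -/
def pcomp {n : ℕ} (f g : PartialInj n) : PartialInj n :=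
  ⟨fun a => (g.1 a).bind f.1, by
    intro a b c ha hb
    rcases Option.bind_eq_some_iff.mp ha with ⟨a', ha1, ha2⟩
    rcases Option.bind_eq_some_iff.mp hb with ⟨b', hb1, hb2⟩
    have h := f.2 a' b' c ha2 hb2
    subst h
    exact g.2 a b a' ha1 hb1⟩

/-- The inverse of a partial injection. -/
noncomputable def pinv {n : ℕ} (f : PartialInj n) : PartialInj n :=
  ⟨fun b => if h : ∃ a, f.1 a = some b then some h.choose else none, by
    intro a b c ha hb
    dsimp only at ha hb
    split_ifs at ha hb with h1 h2
    · have sa := h1.choose_spec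
      have sb := h2.choose_spec
      rw [Option.some_inj] at ha hb
      rw [ha] at sa; rw [hb] at sb
      exact Option.some_inj.mp (sa.symm.trans sb)⟩

/-- The domain of a partial injection, as a finset. -/
def domFinset {n : ℕ} (f : PartialInj n) : Finset (Fin n) :=
  Finset.univ.filter fun a => (f.1 a).isSome

/-- The rank of a partial injection. -/
def rk {n : ℕ} (f : PartialInj n) : ℕ := (domFinset f).card

/-- The partial injection associated with a permutation. -/
def permPI {n : ℕ} (p : Equiv.Perm (Fin n)) : PartialInj n :=
  ⟨fun i => some (p i), by
    intro a b c ha hb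
    rw [Option.some_inj] at ha hb
    exact p.injective (ha.trans hb.symm)⟩

/-- `rzpow n k` is `r^k`, where `r : i ↦ i + 1 (mod n)`. -/
def rzpow (n : ℕ) (k : ℤ) : PartialInj n := permPI (finRotate n ^ k)

/-- A partial rotation: `σ = r^k f` with `f` idempotent. -/
def IsPartialRotation {n : ℕ} (σ : PartialInj n) : Prop :=
  ∃ (k : ℤ) (f : PartialInj n), pcomp f f = f ∧ σ = pcomp (rzpow n k) f

/-- The rotation action `r^k · e = r^k e r^{-k}`. -/
def rotAct (n : ℕ) (k : ℤ) (e : PartialInj n) : PartialInj n :=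
  pcomp (rzpow n k) (pcomp e (rzpow n (-k)))

section Stmt18Aux

variable {n : ℕ}

lemma PIext {f g : PartialInj n} (h : ∀ a, f.1 a = g.1 a) : f = g := Subtype.ext (funext h)

lemma pcomp_apply (f g : PartialInj n) (a : Fin n) : (pcomp f g).1 a = (g.1 a).bind f.1 := rfl

lemma rzpow_apply (k : ℤ) (a : Fin n) : (rzpow n k).1 a = some ((finRotate n ^ k) a) := rfl

/-- Partial identity. -/
def IsPId (e : PartialInj n) : Prop := ∀ a b, e.1 a = some b → b = a

lemma isPId_iff (e : PartialInj n) : IsPId e ↔ pcomp e e = e := by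
  constructor
  · intro h; apply PIext; intro a
    rw [pcomp_apply]
    cases he : e.1 a with
    | none => rfl
    | some b => have hb := h a b he; subst hb; simpa using he
  · intro h a b he
    have h2 : (e.1 a).bind e.1 = some b := by rw [← pcomp_apply, h, he]
    rcases Option.bind_eq_some_iff.mp h2 with ⟨c, hc1, hc2⟩
    rw [he, Option.some_inj] at hc1
    subst hc1
    exact (e.2 a b b he hc2).symm

lemma pinv_some {x : PartialInj n} {a b : Fin n} (h : x.1 a = some b) : (pinv x).1 b = some a := by
  have hex : ∃ a', x.1 a' = some b := ⟨a, h⟩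
  show (if h' : ∃ a', x.1 a' = some b then some h'.choose else none) = some a
  rw [dif_pos hex]
  exact congrArg some (x.2 _ _ b hex.choose_spec h)

lemma pinv_none {x : PartialInj n} {b : Fin n} (h : ¬ ∃ a, x.1 a = some b) : (pinv x).1 b = none := by
  show (if h' : ∃ a', x.1 a' = some b then some h'.choose else none) = none
  rw [dif_neg h]

lemma pinv_spec {x : PartialInj n} {b d : Fin n} (h : (pinv x).1 b = some d) : x.1 d = some b := by
  by_cases hex : ∃ a, x.1 a = some b
  · have : (pinv x).1 b = some hex.choose := dif_pos hex
    rw [this, Option.some_inj] at h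
    rw [← h]; exact hex.choose_spec
  · rw [pinv_none hex] at h; exact absurd h (by simp)

lemma ran_isPId (a : PartialInj n) : IsPId (pcomp a (pinv a)) := by
  intro b c h
  rcases Option.bind_eq_some_iff.mp h with ⟨d, hd1, hd2⟩
  have h2 := pinv_spec hd1
  rw [hd2, Option.some_inj] at h2
  exact h2

lemma pinv_of_isPId {e : PartialInj n} (he : IsPId e) : pinv e = e := by
  apply PIext; intro b
  cases hb : e.1 b with
  | some c => have hc := he b c hb; subst hc; rw [pinv_some hb]
  | none =>
    apply pinv_none
    rintro ⟨a, ha⟩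
    have hba := he a b ha
    subst hba
    rw [ha] at hb; nomatch hb

lemma ran_of_isPId {e : PartialInj n} (he : IsPId e) : pcomp e (pinv e) = e := by
  rw [pinv_of_isPId he]; exact (isPId_iff e).mp he

lemma lemA {k : ℤ} {g : PartialInj n} (hg : IsPId g) :
    pcomp (pinv (pcomp (rzpow n k) g)) (pcomp (rzpow n k) g) = g := by
  set x := pcomp (rzpow n k) g with hx
  apply PIext; intro a
  rw [pcomp_apply]
  cases hga : g.1 a with
  | none =>
    have hxa : x.1 a = none := by rw [hx, pcomp_apply, hga]; rfl
    rw [hxa]; rfl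
  | some b =>
    have hb := hg a b hga; subst hb
    have hxa : x.1 b = some ((finRotate n ^ k) b) := by rw [hx, pcomp_apply, hga]; rfl
    rw [hxa, Option.bind_some, pinv_some hxa]

lemma lemB {k : ℤ} {g : PartialInj n} (hg : IsPId g) :
    pcomp (pcomp (rzpow n k) g) (pinv (pcomp (rzpow n k) g)) = rotAct n k g := by
  set x := pcomp (rzpow n k) g with hx
  set ρ := finRotate n ^ k with hρ
  apply PIext; intro b
  have hR : (rotAct n k g).1 b = (g.1 (ρ⁻¹ b)).bind (fun c => some (ρ c)) := by
    rw [rotAct, pcomp_apply, pcomp_apply, rzpow_apply, zpow_neg, Option.bind_some]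
    rfl
  rw [pcomp_apply, hR]
  by_cases hgb : g.1 (ρ⁻¹ b) = some (ρ⁻¹ b)
  · have hxb : x.1 (ρ⁻¹ b) = some b := by
      rw [hx, pcomp_apply, hgb, Option.bind_some, rzpow_apply, ← hρ,
        Equiv.Perm.coe_inv, Equiv.apply_symm_apply]
    rw [pinv_some hxb, Option.bind_some, hxb, hgb, Option.bind_some,
      Equiv.Perm.coe_inv, Equiv.apply_symm_apply]
  · have hgb' : g.1 (ρ⁻¹ b) = none := by
      cases h : g.1 (ρ⁻¹ b) with
      | none => rfl
      | some c => exact absurd (by rw [h, hg _ _ h]) hgb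
    have hnone : ¬ ∃ a, x.1 a = some b := by
      rintro ⟨a, ha⟩
      rw [hx, pcomp_apply] at ha
      rcases Option.bind_eq_some_iff.mp ha with ⟨c, hc1, hc2⟩
      have hca := hg a c hc1; subst hca
      rw [rzpow_apply, Option.some_inj, ← hρ] at hc2
      have : c = ρ⁻¹ b := by rw [← hc2, Equiv.Perm.coe_inv, Equiv.symm_apply_apply]
      rw [this] at hc1
      rw [hc1] at hgb'; nomatch hgb'
    rw [pinv_none hnone, hgb']
    rfl

lemma rotAct_apply (k : ℤ) (e : PartialInj n) (b : Fin n) :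
    (rotAct n k e).1 b = (e.1 ((finRotate n ^ k)⁻¹ b)).map ((finRotate n ^ k) ·) := by
  rw [rotAct, pcomp_apply, pcomp_apply, rzpow_apply, zpow_neg, Option.bind_some]
  cases e.1 ((finRotate n ^ k)⁻¹ b) <;> rfl

lemma rotAct_zero (e : PartialInj n) : rotAct n 0 e = e := by
  apply PIext; intro b
  rw [rotAct_apply]
  simp

lemma rotAct_add (k l : ℤ) (e : PartialInj n) :
    rotAct n (k + l) e = rotAct n k (rotAct n l e) := by
  apply PIext; intro b
  rw [rotAct_apply, rotAct_apply, rotAct_apply]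
  have h1 : (finRotate n ^ l)⁻¹ ((finRotate n ^ k)⁻¹ b) = (finRotate n ^ (k + l))⁻¹ b := by
    rw [zpow_add, mul_inv_rev, Equiv.Perm.mul_apply]
  rw [h1, Option.map_map]
  cases e.1 ((finRotate n ^ (k + l))⁻¹ b) with
  | none => rfl
  | some c =>
    simp only [Option.map_some, Function.comp_apply, Option.some_inj]
    rw [zpow_add, Equiv.Perm.mul_apply]

lemma rotAct_isPId {e : PartialInj n} (he : IsPId e) (k : ℤ) : IsPId (rotAct n k e) := by
  intro a c h
  rw [rotAct_apply] at h
  rcases Option.map_eq_some_iff.mp h with ⟨d, hd1, hd2⟩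
  have := he _ _ hd1
  subst this
  rw [← hd2, Equiv.Perm.coe_inv, Equiv.apply_symm_apply]

lemma rotAct_stab_neg {e : PartialInj n} {k : ℤ} (h : rotAct n k e = e) :
    rotAct n (-k) e = e := by
  conv_lhs => rw [← h, ← rotAct_add, neg_add_cancel, rotAct_zero]

lemma rotAct_stab_mul {e : PartialInj n} {k : ℤ} (h : rotAct n k e = e) (q : ℤ) :
    rotAct n (k * q) e = e := by
  induction q using Int.induction_on with
  | zero => simpa using rotAct_zero e
  | succ m ih => rw [mul_add, mul_one, add_comm, rotAct_add, ih, h]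
  | pred m ih => rw [mul_sub, mul_one, sub_eq_add_neg, add_comm, rotAct_add, ih, rotAct_stab_neg h]

end Stmt18Aux

/-- `a, b ∈ Rot_n` are `D`-related iff `ran b` is a rotation of `ran a`; consequently
the `D`-class of an idempotent `e` contains exactly `j(e)` idempotents. -/
theorem stmt18 (n : ℕ) :
    (∀ a b : PartialInj n, IsPartialRotation a → IsPartialRotation b →
      ((∃ x : PartialInj n, IsPartialRotation x ∧
          pcomp (pinv x) x = pcomp a (pinv a) ∧
          pcomp x (pinv x) = pcomp b (pinv b)) ↔
        ∃ k : ℤ, rotAct n k (pcomp a (pinv a)) = pcomp b (pinv b))) ∧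
    ∀ (e : PartialInj n), pcomp e e = e → IsPartialRotation e →
      ∀ (j : ℕ), 0 < j → rotAct n (j : ℤ) e = e →
        (∀ i : ℕ, 0 < i → i < j → rotAct n (i : ℤ) e ≠ e) →
        Nat.card {f : PartialInj n | pcomp f f = f ∧
          ∃ x : PartialInj n, IsPartialRotation x ∧
            pcomp (pinv x) x = pcomp e (pinv e) ∧
            pcomp x (pinv x) = pcomp f (pinv f)} = j := by
  constructor
  · intro a b _ _
    constructor
    · rintro ⟨x, ⟨k, g, hgid, rfl⟩, h1, h2⟩
      have hgI : IsPId g := (isPId_iff g).mpr hgid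
      rw [lemA hgI] at h1
      exact ⟨k, by rw [← h1, ← lemB hgI]; exact h2⟩
    · rintro ⟨k, hk⟩
      have hI := ran_isPId a
      exact ⟨pcomp (rzpow n k) (pcomp a (pinv a)),
        ⟨k, pcomp a (pinv a), (isPId_iff _).mp hI, rfl⟩,
        lemA hI, by rw [lemB hI, hk]⟩
  · intro e heidem _ j hj hstab hmin
    have heI : IsPId e := (isPId_iff e).mpr heidem
    have hE : pcomp e (pinv e) = e := ran_of_isPId heI
    have hset : {f : PartialInj n | pcomp f f = f ∧
          ∃ x : PartialInj n, IsPartialRotation x ∧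
            pcomp (pinv x) x = pcomp e (pinv e) ∧
            pcomp x (pinv x) = pcomp f (pinv f)}
        = Set.range (fun i : Fin j => rotAct n ((i : ℕ) : ℤ) e) := by
      ext f
      simp only [Set.mem_setOf_eq, Set.mem_range]
      constructor
      · rintro ⟨hfidem, x, ⟨k, g, hgid, rfl⟩, h1, h2⟩
        have hgI : IsPId g := (isPId_iff g).mpr hgid
        have hfI : IsPId f := (isPId_iff f).mpr hfidem
        rw [lemA hgI, hE] at h1
        rw [lemB hgI, ran_of_isPId hfI, h1] at h2
        have hj0 : (0:ℤ) < (j:ℤ) := by exact_mod_cast hj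
        have hs0 : 0 ≤ k % (j:ℤ) := Int.emod_nonneg k hj0.ne'
        have hsj : k % (j:ℤ) < (j:ℤ) := Int.emod_lt_of_pos k hj0
        refine ⟨⟨(k % (j:ℤ)).toNat, by omega⟩, ?_⟩
        show rotAct n (((k % (j:ℤ)).toNat : ℕ) : ℤ) e = f
        rw [Int.toNat_of_nonneg hs0, ← h2]
        conv_rhs => rw [show k = k % (j:ℤ) + (j:ℤ) * (k / (j:ℤ)) from (Int.emod_add_mul_ediv k j).symm]
        rw [rotAct_add, rotAct_stab_mul hstab]
      · rintro ⟨i, rfl⟩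
        have hfI := rotAct_isPId heI ((i:ℕ):ℤ)
        refine ⟨(isPId_iff _).mp hfI, pcomp (rzpow n ((i:ℕ):ℤ)) e,
          ⟨((i:ℕ):ℤ), e, heidem, rfl⟩, ?_, ?_⟩
        · rw [lemA heI, hE]
        · rw [lemB heI, ran_of_isPId hfI]
    have hinj : Function.Injective (fun i : Fin j => rotAct n ((i : ℕ) : ℤ) e) := by
      have haux : ∀ i i' : Fin j, (i:ℕ) < (i':ℕ) →
          rotAct n ((i:ℕ):ℤ) e ≠ rotAct n ((i':ℕ):ℤ) e := by
        intro i i' hlt h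
        have h2 := congrArg (rotAct n (-((i:ℕ):ℤ))) h
        rw [← rotAct_add, ← rotAct_add, neg_add_cancel, rotAct_zero] at h2
        refine hmin ((i':ℕ) - (i:ℕ)) (by omega) (by omega) ?_
        rw [Nat.cast_sub hlt.le, ← neg_add_eq_sub]
        exact h2.symm
      intro i i' h
      rcases lt_trichotomy ((i:ℕ)) ((i':ℕ)) with hl | heq | hg
      · exact absurd h (haux i i' hl)
      · exact Fin.ext heq
      · exact absurd h.symm (haux i' i hg)
    rw [hset, Nat.card_range_of_injective hinj, Nat.card_eq_fintype_card, Fintype.card_fin]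
end

section
/- The partial rotation monoid Rot_n has cardinality 2^n · n − n + 1. -/
/-! ### Auxiliary definitions -/

open Fin.NatCast

/-- The partial identity on a finite set. -/
def pid {n : ℕ} (S : Finset (Fin n)) : PartialInj n :=
  ⟨fun a => if a ∈ S then some a else none, by
    intro a b c ha hb
    by_cases h1 : a ∈ S <;> by_cases h2 : b ∈ S <;> simp_all⟩

lemma pid_idem {n : ℕ} (S : Finset (Fin n)) : pcomp (pid S) (pid S) = pid S := by
  apply Subtype.ext
  funext a
  by_cases h : a ∈ S <;> simp [pcomp, pid, h]

/-- The partial rotation `r^k` restricted to `S`. -/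
def rotF {n : ℕ} (k : ℤ) (S : Finset (Fin n)) : PartialInj n := pcomp (rzpow n k) (pid S)

lemma rotF_isPR {n : ℕ} (k : ℤ) (S : Finset (Fin n)) : IsPartialRotation (rotF k S) :=
  ⟨k, pid S, pid_idem S, rfl⟩

lemma rotF_apply {n : ℕ} (k : ℤ) (S : Finset (Fin n)) (a : Fin n) :
    (rotF k S).1 a = if a ∈ S then some ((finRotate n ^ k) a) else none := by
  by_cases h : a ∈ S <;> simp [rotF, pcomp, pid, rzpow, permPI, h]

lemma isPR_iff {n : ℕ} (σ : PartialInj n) :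
    IsPartialRotation σ ↔ ∃ (k : ℤ) (S : Finset (Fin n)), σ = rotF k S := by
  constructor
  · rintro ⟨k, f, hf, rfl⟩
    refine ⟨k, Finset.univ.filter (fun a => f.1 a = some a), ?_⟩
    apply Subtype.ext
    funext a
    have hfa : f.1 a = none ∨ f.1 a = some a := by
      rcases h : f.1 a with _ | b
      · exact Or.inl rfl
      · have hb : f.1 b = some b := by
          have h2 : (f.1 a).bind f.1 = f.1 a := congrFun (congrArg Subtype.val hf) a
          rw [h] at h2
          simpa using h2
        have hab := f.2 a b b h hb
        subst hab
        exact Or.inr rfl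
    rcases hfa with h | h <;>
      simp [rotF_apply, pcomp, rzpow, permPI, h]
  · rintro ⟨k, S, rfl⟩
    exact rotF_isPR k S

lemma finRotate_pow_apply {n : ℕ} (m : ℕ) (a : Fin (n + 1)) :
    (finRotate (n + 1) ^ m) a = a + (m : Fin (n + 1)) := by
  induction m with
  | zero => simp
  | succ m ih =>
      rw [pow_succ', Equiv.Perm.mul_apply, finRotate_succ_apply, ih]
      push_cast
      exact add_assoc _ _ _

lemma finRotate_pow_self {n : ℕ} : finRotate (n + 1) ^ (n + 1) = 1 := by
  ext a
  simp [finRotate_pow_apply, Fin.natCast_self]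

lemma rzpow_reduce (n : ℕ) (k : ℤ) :
    ∃ m : Fin (n + 1), finRotate (n + 1) ^ k = finRotate (n + 1) ^ ((m : ℕ)) := by
  have h1 : 0 ≤ k % ((n : ℤ) + 1) := Int.emod_nonneg k (by positivity)
  have h2 : k % ((n : ℤ) + 1) < (n : ℤ) + 1 := Int.emod_lt_of_pos k (by positivity)
  refine ⟨⟨(k % ((n : ℤ) + 1)).toNat, by omega⟩, ?_⟩
  rw [zpow_eq_zpow_emod' k finRotate_pow_self]
  rw [← zpow_natCast]
  congr 1
  push_cast
  rw [Int.toNat_of_nonneg h1]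

/-- Parametrization of the partial rotations, for `n ≥ 1`. -/
def F (m : ℕ) :
    Option (Fin (m + 1) × {S : Finset (Fin (m + 1)) // S.Nonempty}) →
      {σ : PartialInj (m + 1) // IsPartialRotation σ}
  | none => ⟨rotF 0 ∅, rotF_isPR 0 ∅⟩
  | some (k, S) => ⟨rotF ((k : ℕ) : ℤ) S.1, rotF_isPR _ _⟩

lemma F_bijective (m : ℕ) : Function.Bijective (F m) := by
  constructor
  · rintro (_ | ⟨k, S, hS⟩) (_ | ⟨j, T, hT⟩) h
    · rfl
    · exfalso
      obtain ⟨a, ha⟩ := hT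
      have h1 : (rotF (0 : ℤ) (∅ : Finset (Fin (m+1)))).1 a = (rotF ((j:ℕ):ℤ) T).1 a :=
        congrFun (congrArg (fun σ => σ.1.1) h) a
      rw [rotF_apply, rotF_apply] at h1
      simp [ha] at h1
    · exfalso
      obtain ⟨a, ha⟩ := hS
      have h1 : (rotF ((k:ℕ):ℤ) S).1 a = (rotF (0 : ℤ) (∅ : Finset (Fin (m+1)))).1 a :=
        congrFun (congrArg (fun σ => σ.1.1) h) a
      rw [rotF_apply, rotF_apply] at h1
      simp [ha] at h1
    · have h1 : ∀ a, (rotF ((k:ℕ):ℤ) S).1 a = (rotF ((j:ℕ):ℤ) T).1 a := fun a =>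
        congrFun (congrArg (fun σ => σ.1.1) h) a
      have hST : S = T := by
        ext a
        have := h1 a
        rw [rotF_apply, rotF_apply] at this
        by_cases h2 : a ∈ S <;> by_cases h3 : a ∈ T <;> simp_all
      have hkj : k = j := by
        obtain ⟨a, ha⟩ := hS
        have := h1 a
        rw [rotF_apply, rotF_apply, if_pos ha, if_pos (hST ▸ ha)] at this
        rw [zpow_natCast, zpow_natCast, finRotate_pow_apply, finRotate_pow_apply] at this
        have h4 : ((k : ℕ) : Fin (m+1)) = ((j : ℕ) : Fin (m+1)) := by
          have := Option.some_injective _ this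
          exact add_left_cancel this
        rwa [Fin.cast_val_eq_self, Fin.cast_val_eq_self] at h4
      subst hST; subst hkj; rfl
  · rintro ⟨σ, hσ⟩
    rw [isPR_iff] at hσ
    obtain ⟨k, S, rfl⟩ := hσ
    obtain ⟨k', hk'⟩ := rzpow_reduce m k
    have hrot : rotF ((k' : ℕ) : ℤ) S = rotF k S := by
      apply Subtype.ext
      funext a
      rw [rotF_apply, rotF_apply, hk', zpow_natCast]
    by_cases hS : S.Nonempty
    · exact ⟨some (k', ⟨S, hS⟩), Subtype.ext hrot⟩
    · have hSe : S = ∅ := Finset.not_nonempty_iff_eq_empty.mp hS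
      subst hSe
      have hz : rotF (0 : ℤ) (∅ : Finset (Fin (m+1))) = rotF k ∅ := by
        apply Subtype.ext
        funext a
        rw [rotF_apply, rotF_apply]
        simp
      exact ⟨none, Subtype.ext hz⟩

lemma card_nonempty_finsets (m : ℕ) :
    Fintype.card {S : Finset (Fin m) // S.Nonempty} = 2 ^ m - 1 := by
  have e : {S : Finset (Fin m) // S.Nonempty} ≃ {S : Finset (Fin m) // ¬ S = ∅} :=
    Equiv.subtypeEquivRight (fun S => by simp [Finset.nonempty_iff_ne_empty])
  rw [Fintype.card_congr e, Fintype.card_subtype_compl, Fintype.card_subtype_eq,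
    Fintype.card_finset, Fintype.card_fin]

/-- The partial rotation monoid `Rot_n` has cardinality `2^n · n - n + 1`. -/
theorem stmt19 (n : ℕ) :
    Nat.card {σ : PartialInj n // IsPartialRotation σ} = 2 ^ n * n - n + 1 := by
  cases n with
  | zero =>
      have hall : ∀ σ : PartialInj 0, IsPartialRotation σ :=
        fun σ => ⟨0, σ, Subtype.ext (funext fun a => a.elim0),
          Subtype.ext (funext fun a => a.elim0)⟩
      haveI : Unique (PartialInj 0) :=
        ⟨⟨⟨fun a => a.elim0, fun a => a.elim0⟩⟩,
          fun σ => Subtype.ext (funext fun a => a.elim0)⟩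
      rw [Nat.card_congr (Equiv.subtypeUnivEquiv hall)]
      simp [Nat.card_unique]
  | succ m =>
      have e := (Equiv.ofBijective (F m) (F_bijective m)).symm
      rw [Nat.card_congr e, Nat.card_eq_fintype_card, Fintype.card_option,
        Fintype.card_prod, Fintype.card_fin, card_nonempty_finsets]
      have h1 : 1 ≤ 2 ^ (m + 1) := Nat.one_le_two_pow
      have h2 : (m + 1) * (2 ^ (m + 1) - 1) = (m + 1) * 2 ^ (m + 1) - (m + 1) := by
        rw [Nat.mul_sub, mul_one]
      have h3 : m + 1 ≤ (m + 1) * 2 ^ (m + 1) := Nat.le_mul_of_pos_right _ (by positivity)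
      rw [h2, mul_comm (m + 1) (2 ^ (m + 1))]
end
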